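/- arXiv:2412.20401 — 5 statements merged into one kernel-verified Lean document; each statement's English description precedes it below -/
import Mathlib

section
/- For any ω-poset P and any element p ∈ P, the set {S ∈ SP : S ⊆ p^∧} (all minimal selectors every element of which has a common lower bound with p) is a closed subset of the spectrum SP. Moreover the closure of p_S = {S ∈ SP : p ∈ S} is always contained in this set, with equality when P is prime. -/
namespace OP

section OmegaPoset

variable (P : Type*) [PartialOrder P]

/-- The n-th cone of the poset: `cone 0` is the set of maximal elements. -/
def cone : ℕ → Set P
  | 0 => {p | ∀ q, ¬ p < q}
  | n + 1 => {p | ∀ q, p < q → q ∈ cone n}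

/-- The n-th level: atoms (minimal elements) of the n-th cone. -/
def level (n : ℕ) : Set P := {p | p ∈ cone P n ∧ ∀ q, q < p → q ∉ cone P n}

/-- An ω-poset: all levels finite and every element in some cone. -/
def IsOmegaPoset : Prop := (∀ n, (level P n).Finite) ∧ ∀ p : P, ∃ n, p ∈ cone P n

variable {P}

/-- `refines A C` : every element of `A` lies below some element of `C` (`A ≤ C`). -/
def refines (A C : Set P) : Prop := ∀ a ∈ A, ∃ c ∈ C, a ≤ c

/-- A cap is a subset refined by some level. -/
def IsCap (C : Set P) : Prop := ∃ n, refines (level P n) C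

/-- A selector meets every cap. -/
def IsSelector (S : Set P) : Prop := ∀ C : Set P, IsCap C → (S ∩ C).Nonempty

/-- `wedge p q` : `p` and `q` have a common lower bound. -/
def wedge (p q : P) : Prop := ∃ r, r ≤ p ∧ r ≤ q

def wedgeSet (p : P) : Set P := {q | wedge p q}

/-- The adjacency relation `p ⌅ q`. -/
def barwedge (p q : P) : Prop := ∀ C : Set P, IsCap C → ∃ c ∈ C, wedge p c ∧ wedge c q

/-- `p ⊲_C q`. -/
def starBelowOn (C : Set P) (p q : P) : Prop := ∀ c ∈ C, wedge p c → c ≤ q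

/-- The star-below relation `p ⊲ q`. -/
def starBelow (p q : P) : Prop := ∃ n, starBelowOn (level P n) p q

/-- A clique: pairwise adjacent set. -/
def IsClique (X : Set P) : Prop := ∀ p ∈ X, ∀ q ∈ X, barwedge p q

/-- Unbounded subset: meets `C^≥` for every cap `C`. -/
def IsUnbounded (X : Set P) : Prop := ∀ C : Set P, IsCap C → ∃ u ∈ X, ∃ c ∈ C, u ≤ c

variable (P)

/-- Regularity: every level is eventually star-refined by a later level. -/
def IsRegular : Prop :=
  ∀ m, ∃ n, m < n ∧ ∀ p ∈ level P n, ∃ q ∈ level P m, starBelow p q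

/-- The spectrum: minimal selectors. -/
def Spec : Set (Set P) := {S | IsSelector S ∧ ∀ T ⊆ S, IsSelector T → T = S}

def SpecT : Type _ := {S : Set P // S ∈ Spec P}

instance : TopologicalSpace (SpecT P) :=
  TopologicalSpace.generateFrom {U | ∃ p : P, U = {S : SpecT P | p ∈ S.1}}

/-- The clique-spectrum: unbounded maximal cliques. -/
def CliqueSpec : Set (Set P) :=
  {X | IsUnbounded X ∧ IsClique X ∧ ∀ Y : Set P, IsClique Y → X ⊆ Y → Y = X}

def CliqueSpecT : Type _ := {X : Set P // X ∈ CliqueSpec P}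

instance : TopologicalSpace (CliqueSpecT P) :=
  TopologicalSpace.generateFrom {U | ∃ p : P, U = {X : CliqueSpecT P | p ∉ X.1}}

variable {P}

/-- The basic open set `p_S`. -/
def pSOpen (p : P) : Set (SpecT P) := {S | p ∈ S.1}

/-- The closed set `p̄_S = {S : S ⊆ p^∧}`. -/
def pSBar (p : P) : Set (SpecT P) := {S | S.1 ⊆ wedgeSet p}

/-- Prime ω-poset: every basic open set is nonempty. -/
def IsPrimePoset (P : Type*) [PartialOrder P] : Prop := ∀ p : P, (pSOpen p).Nonempty

end OmegaPoset

end OP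

section Aux

open OP

variable {P : Type*} [PartialOrder P]

lemma aux_cone_mono : ∀ n, cone P n ⊆ cone P (n + 1)
  | 0 => fun p hp q hq => absurd hq (hp q)
  | n + 1 => fun p hp q hq => aux_cone_mono n (hp q hq)

lemma aux_level_succ_refines (n : ℕ) : refines (level P (n + 1)) (level P n) := by
  intro a ha
  by_cases h : a ∈ cone P n
  · refine ⟨a, ⟨h, fun q hq hqc => ha.2 q hq (aux_cone_mono n hqc)⟩, le_rfl⟩
  · cases n with
    | zero =>
      simp only [cone, Set.mem_setOf_eq, not_forall, not_not] at h
      obtain ⟨q, hq⟩ := h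
      have hq0 : q ∈ cone P 0 := ha.1 q hq
      exact ⟨q, ⟨hq0, fun r hr hr0 => hr0 q hr⟩, le_of_lt hq⟩
    | succ m =>
      simp only [cone, Set.mem_setOf_eq, not_forall] at h
      obtain ⟨q, hq, hqm⟩ := h
      have hq1 : q ∈ cone P (m + 1) := ha.1 q hq
      exact ⟨q, ⟨hq1, fun r hr hr1 => hqm (hr1 q hr)⟩, le_of_lt hq⟩

lemma aux_refines_refl (A : Set P) : refines A A := fun a ha => ⟨a, ha, le_rfl⟩

lemma aux_refines_trans {A B C : Set P} (h1 : refines A B) (h2 : refines B C) :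
    refines A C := by
  intro a ha
  obtain ⟨b, hb, hab⟩ := h1 a ha
  obtain ⟨c, hc, hbc⟩ := h2 b hb
  exact ⟨c, hc, hab.trans hbc⟩

lemma aux_level_refines_of_le {n k : ℕ} (h : n ≤ k) :
    refines (level P k) (level P n) := by
  induction k with
  | zero => cases Nat.le_zero.mp h; exact aux_refines_refl _
  | succ m ih =>
    rcases Nat.lt_or_ge n (m + 1) with h' | h'
    · exact aux_refines_trans (aux_level_succ_refines m) (ih (Nat.lt_succ_iff.mp h'))
    · have : n = m + 1 := le_antisymm h h'
      subst this; exact aux_refines_refl _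

lemma aux_caps_common {C D : Set P} (hC : IsCap C) (hD : IsCap D) :
    ∃ k, refines (level P k) C ∧ refines (level P k) D := by
  obtain ⟨n, hn⟩ := hC
  obtain ⟨m, hm⟩ := hD
  exact ⟨max n m,
    aux_refines_trans (aux_level_refines_of_le (le_max_left n m)) hn,
    aux_refines_trans (aux_level_refines_of_le (le_max_right n m)) hm⟩

lemma aux_level_isCap (k : ℕ) : IsCap (level P k) := ⟨k, aux_refines_refl _⟩

lemma aux_pin {S : Set P} (hS : S ∈ Spec P) {s : P} (hs : s ∈ S) :
    ∃ C : Set P, IsCap C ∧ S ∩ C ⊆ {s} := by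
  by_cases h : IsSelector (S \ {s})
  · have heq := hS.2 (S \ {s}) Set.diff_subset h
    have hmem : s ∈ S \ {s} := by rw [heq]; exact hs
    exact absurd rfl hmem.2
  · simp only [IsSelector, not_forall] at h
    obtain ⟨C, hC, hne⟩ := h
    refine ⟨C, hC, fun x hx => ?_⟩
    by_contra hxs
    exact hne ⟨x, ⟨hx.1, hxs⟩, hx.2⟩

lemma aux_upClosed {S : Set P} (hS : S ∈ Spec P) {s t : P} (hs : s ∈ S) (hst : s ≤ t) :
    t ∈ S := by
  by_contra ht
  obtain ⟨C, hC, hpin⟩ := aux_pin hS hs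
  have hcap : IsCap ((C \ {s}) ∪ {t}) := by
    obtain ⟨n, hn⟩ := hC
    refine ⟨n, fun a ha => ?_⟩
    obtain ⟨c, hc, hac⟩ := hn a ha
    by_cases hcs : c = s
    · exact ⟨t, Or.inr rfl, hac.trans (hcs ▸ hst)⟩
    · exact ⟨c, Or.inl ⟨hc, hcs⟩, hac⟩
  obtain ⟨x, hxS, hxC⟩ := hS.1 _ hcap
  rcases hxC with ⟨hxC, hxs⟩ | hxt
  · exact hxs (hpin ⟨hxS, hxC⟩)
  · exact ht (hxt ▸ hxS)

lemma aux_directed {S : Set P} (hS : S ∈ Spec P) {s u : P} (hs : s ∈ S) (hu : u ∈ S) :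
    ∃ w ∈ S, w ≤ s ∧ w ≤ u := by
  obtain ⟨C, hC, hpinC⟩ := aux_pin hS hs
  obtain ⟨D, hD, hpinD⟩ := aux_pin hS hu
  obtain ⟨k, hkC, hkD⟩ := aux_caps_common hC hD
  obtain ⟨w, hwS, hwk⟩ := hS.1 _ (aux_level_isCap k)
  obtain ⟨c, hc, hwc⟩ := hkC w hwk
  obtain ⟨d, hd, hwd⟩ := hkD w hwk
  have hcs : c = s := hpinC ⟨aux_upClosed hS hwS hwc, hc⟩
  have hdu : d = u := hpinD ⟨aux_upClosed hS hwS hwd, hd⟩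
  exact ⟨w, hwS, hcs ▸ hwc, hdu ▸ hwd⟩

lemma aux_nonempty {S : Set P} (hS : S ∈ Spec P) : S.Nonempty := by
  obtain ⟨x, hxS, _⟩ := hS.1 Set.univ ⟨0, fun a _ => ⟨a, trivial, le_rfl⟩⟩
  exact ⟨x, hxS⟩

lemma aux_finsetLB {S : Set P} (hS : S ∈ Spec P) (F : Finset P) (hF : ↑F ⊆ S) :
    ∃ w ∈ S, ∀ q ∈ F, w ≤ q := by
  classical
  induction F using Finset.induction_on with
  | empty =>
    obtain ⟨w, hw⟩ := aux_nonempty hS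
    exact ⟨w, hw, fun q hq => absurd hq (Finset.notMem_empty q)⟩
  | @insert a G ha ih =>
    have haS : a ∈ S := hF (Finset.mem_insert_self a G)
    obtain ⟨w, hwS, hw⟩ := ih (fun x hx => hF (Finset.mem_insert_of_mem hx))
    obtain ⟨v, hvS, hva, hvw⟩ := aux_directed hS haS hwS
    refine ⟨v, hvS, fun q hq => ?_⟩
    rcases Finset.mem_insert.mp hq with rfl | hq
    · exact hva
    · exact hvw.trans (hw q hq)

lemma aux_isOpen_pSOpen (q : P) : IsOpen (pSOpen (P := P) q) :=
  TopologicalSpace.isOpen_generateFrom_of_mem ⟨q, rfl⟩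

lemma aux_basis {U : Set (SpecT P)} (hU : IsOpen U) (S : SpecT P) (hSU : S ∈ U) :
    ∃ F : Finset P, ↑F ⊆ S.1 ∧ ∀ T : SpecT P, ↑F ⊆ T.1 → T ∈ U := by
  classical
  have hU' : TopologicalSpace.GenerateOpen
      {V | ∃ p : P, V = {S : SpecT P | p ∈ S.1}} U := hU
  clear hU
  revert hSU
  induction hU' with
  | basic V hV =>
    intro hSU
    obtain ⟨q, rfl⟩ := hV
    exact ⟨{q}, by simpa using hSU, fun T hT => hT (Finset.mem_coe.mpr (Finset.mem_singleton_self q))⟩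
  | univ => exact fun _ => ⟨∅, by simp, fun T _ => trivial⟩
  | inter V W hV hW ihV ihW =>
    intro hSU
    obtain ⟨F1, hF1, hT1⟩ := ihV hSU.1
    obtain ⟨F2, hF2, hT2⟩ := ihW hSU.2
    refine ⟨F1 ∪ F2, ?_, fun T hT => ⟨hT1 T ?_, hT2 T ?_⟩⟩
    · intro x hx
      rcases Finset.mem_union.mp hx with h | h
      · exact hF1 h
      · exact hF2 h
    · exact fun x hx => hT (Finset.mem_union_left _ hx)
    · exact fun x hx => hT (Finset.mem_union_right _ hx)
  | sUnion K hK ih =>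
    intro hSU
    obtain ⟨V, hVK, hSV⟩ := hSU
    obtain ⟨F, hF, hT⟩ := ih V hVK hSV
    exact ⟨F, hF, fun T hTF => ⟨V, hVK, hT T hTF⟩⟩

end Aux

open OP in
/-- For any ω-poset `P` and `p ∈ P`, the set `{S ∈ SP : S ⊆ p^∧}` is closed in the
spectrum; the closure of `p_S` is always contained in it, with equality when `P` is prime. -/
theorem stmt0 {P : Type*} [PartialOrder P] (hP : IsOmegaPoset P) (p : P) :
    IsClosed (pSBar p) ∧ closure (pSOpen p) ⊆ pSBar p ∧
      (IsPrimePoset P → closure (pSOpen p) = pSBar p) := by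
  have hclosed : IsClosed (pSBar p) := by
    rw [← isOpen_compl_iff]
    have : (pSBar p)ᶜ = ⋃ q ∈ {q : P | ¬ wedge p q}, pSOpen q := by
      ext S
      simp only [pSBar, pSOpen, wedgeSet, Set.mem_compl_iff, Set.mem_setOf_eq,
        Set.subset_def, not_forall, Set.mem_iUnion]
      tauto
    rw [this]
    exact isOpen_biUnion fun q _ => aux_isOpen_pSOpen q
  have hsubset : pSOpen p ⊆ pSBar p := by
    intro S hS q hq
    obtain ⟨w, _, hwp, hwq⟩ := aux_directed S.2 hS hq
    exact ⟨w, hwp, hwq⟩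
  have hcl : closure (pSOpen p) ⊆ pSBar p := closure_minimal hsubset hclosed
  refine ⟨hclosed, hcl, fun hprime => ?_⟩
  refine le_antisymm hcl ?_
  intro S hS
  rw [mem_closure_iff]
  intro U hUopen hSU
  obtain ⟨F, hFS, hT⟩ := aux_basis hUopen S hSU
  obtain ⟨w, hwS, hw⟩ := aux_finsetLB S.2 F hFS
  obtain ⟨r, hrp, hrw⟩ := hS hwS
  obtain ⟨T, hrT⟩ := hprime r
  refine ⟨T, hT T fun q hq => ?_, aux_upClosed T.2 hrT hrp⟩
  exact aux_upClosed T.2 hrT (hrw.trans (hw q hq))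
end

section
/- For any ω-poset P and elements p, q ∈ P: p ⊲ q (p is star-below q) if and only if the closed set {S ∈ SP : S ⊆ p^∧} is contained in the open set q_S = {S ∈ SP : q ∈ S}. -/
open OP in
/-- Every level is (trivially) a cap. -/
lemma OP.level_isCap {P : Type*} [PartialOrder P] (n : ℕ) : IsCap (level P n) :=
  ⟨n, fun a ha => ⟨a, ha, le_refl a⟩⟩

open OP in
/-- Minimal selectors are up-sets. -/
lemma OP.Spec.mem_of_le {P : Type*} [PartialOrder P] {S : Set P} (hS : S ∈ Spec P)
    {c q : P} (hc : c ∈ S) (hcq : c ≤ q) : q ∈ S := by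
  by_contra hq
  -- S \ {c} is a proper subset, hence not a selector
  have hne : S \ {c} ≠ S := by
    intro h
    have : c ∈ S \ {c} := by rw [h]; exact hc
    exact this.2 rfl
  have hnotsel : ¬ IsSelector (S \ {c}) := fun h => hne (hS.2 _ Set.diff_subset h)
  rw [IsSelector] at hnotsel
  push_neg at hnotsel
  obtain ⟨C, hC, hCemp⟩ := hnotsel
  -- replace c by q in C
  have hcap : IsCap ((C \ {c}) ∪ {q}) := by
    obtain ⟨m, hm⟩ := hC
    refine ⟨m, fun a ha => ?_⟩
    obtain ⟨c0, hc0C, hac0⟩ := hm a ha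
    by_cases h : c0 = c
    · exact ⟨q, Or.inr rfl, le_trans hac0 (h ▸ hcq)⟩
    · exact ⟨c0, Or.inl ⟨hc0C, h⟩, hac0⟩
  obtain ⟨x, hxS, hxC⟩ := hS.1 _ hcap
  rcases hxC with ⟨hxC0, hxnec⟩ | hxq
  · rw [Set.eq_empty_iff_forall_notMem] at hCemp
    exact hCemp x ⟨⟨hxS, hxnec⟩, hxC0⟩
  · exact hq (hxq ▸ hxS)

open OP in
/-- Every cap contains a finite subcap (using finiteness of levels). -/
lemma OP.IsCap.exists_finite_subcap {P : Type*} [PartialOrder P] (hP : IsOmegaPoset P)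
    {C : Set P} (hC : IsCap C) : ∃ C' ⊆ C, C'.Finite ∧ IsCap C' := by
  obtain ⟨n, hn⟩ := hC
  choose f hf1 hf2 using hn
  classical
  refine ⟨(fun a : P => if h : a ∈ level P n then f a h else a) '' level P n, ?_, ?_, n, ?_⟩
  · rintro x ⟨a, ha, rfl⟩
    simp only [dif_pos ha]
    exact hf1 a ha
  · exact (hP.1 n).image _
  · intro a ha
    refine ⟨_, Set.mem_image_of_mem _ ha, ?_⟩
    simp only [dif_pos ha]
    exact hf2 a ha

open OP in
/-- Every selector contains a minimal selector. -/
lemma OP.exists_minimal_selector {P : Type*} [PartialOrder P] (hP : IsOmegaPoset P)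
    {S0 : Set P} (hS0 : IsSelector S0) :
    ∃ S ∈ Spec P, S ⊆ S0 := by
  have hz := zorn_superset_nonempty {T : Set P | IsSelector T ∧ T ⊆ S0} ?_ S0 ⟨hS0, subset_rfl⟩
  · obtain ⟨m, hmS0, hm⟩ := hz
    refine ⟨m, ⟨hm.prop.1, fun T hTm hT => ?_⟩, hmS0⟩
    exact hm.eq_of_le ⟨hT, hTm.trans hmS0⟩ hTm
  · rintro c hcsub hchain ⟨W, hW⟩
    refine ⟨⋂₀ c, ⟨?_, (Set.sInter_subset_of_mem hW).trans (hcsub hW).2⟩,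
      fun s hs => Set.sInter_subset_of_mem hs⟩
    intro C hC
    obtain ⟨C', hC'C, hC'fin, hC'cap⟩ := hC.exists_finite_subcap hP
    -- intersections with C' form a finite family; pick a minimal one
    have hfin : ((fun T : Set P => T ∩ C') '' c).Finite := by
      apply Set.Finite.subset hC'fin.finite_subsets
      rintro x ⟨T, _, rfl⟩
      exact Set.inter_subset_right
    obtain ⟨T0, hT0c, hT0min⟩ :=
      Set.Finite.exists_minimalFor' (fun T : Set P => T ∩ C') c hfin ⟨W, hW⟩
    have hT0sub : ∀ T ∈ c, T0 ∩ C' ⊆ T := by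
      intro T hTc
      rcases eq_or_ne T T0 with rfl | hne
      · exact Set.inter_subset_left
      rcases hchain hTc hT0c hne with h | h
      · have : T0 ∩ C' = T ∩ C' :=
          le_antisymm (hT0min hTc (Set.inter_subset_inter_left _ h)) (Set.inter_subset_inter_left _ h)
        exact this ▸ Set.inter_subset_left
      · exact Set.inter_subset_left.trans h
    obtain ⟨x, hxT0, hxC'⟩ := (hcsub hT0c).1 C' hC'cap
    exact ⟨x, Set.mem_sInter.2 fun T hTc => hT0sub T hTc ⟨hxT0, hxC'⟩, hC'C hxC'⟩

open OP in
/-- `p ⊲ q` iff `p̄_S ⊆ q_S`. -/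
theorem stmt1 {P : Type*} [PartialOrder P] (hP : IsOmegaPoset P) (p q : P) :
    starBelow p q ↔ pSBar p ⊆ pSOpen q := by
  constructor
  · rintro ⟨n, hn⟩ S hS
    obtain ⟨c, hcS, hclev⟩ := S.2.1 (level P n) (level_isCap n)
    have hcw : wedge p c := hS hcS
    exact OP.Spec.mem_of_le S.2 hcS (hn c hclev hcw)
  · intro h
    by_contra hns
    rw [starBelow] at hns
    push_neg at hns
    have hbad : ∀ n : ℕ, ∃ c ∈ level P n, wedge p c ∧ ¬ c ≤ q := by
      intro n
      have := hns n
      rw [starBelowOn] at this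
      push_neg at this
      exact this
    -- S0 is a selector
    have hS0 : IsSelector {y : P | wedge p y ∧ y ≠ q} := by
      intro C hC
      obtain ⟨n, hn⟩ := hC
      obtain ⟨cn, hcnlev, hcnw, hcnq⟩ := hbad n
      obtain ⟨c, hcC, hcnc⟩ := hn cn hcnlev
      obtain ⟨r, hrp, hrcn⟩ := hcnw
      refine ⟨c, ⟨⟨r, hrp, hrcn.trans hcnc⟩, ?_⟩, hcC⟩
      rintro rfl
      exact hcnq hcnc
    obtain ⟨S, hSspec, hSsub⟩ := OP.exists_minimal_selector hP hS0
    have hSbar : (⟨S, hSspec⟩ : SpecT P) ∈ pSBar p := fun y hy => (hSsub hy).1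
    exact (hSsub (h hSbar)).2 rfl
end

section
/- For an ω-poset P, the following are equivalent: (1) P is predetermined, i.e. every non-atomic p ∈ P admits q with q^< = p^≤; (2) for every p ∈ P there is a minimal selector S containing p with S ⊆ p^≤ ∪ p^≥; (3) for every n ∈ ω, A ⊆ P_n and B ⊆ P^n, if ⋃_{a∈A} a_S ⊆ ⋃_{b∈B} b_S then A ≤ B (every element of A lies below some element of B). -/
namespace OPAux

open OP

variable {P : Type*} [PartialOrder P]

lemma cone_succ_self {n : ℕ} : cone P n ⊆ cone P (n + 1) := by
  induction n with
  | zero => intro p hp q hq; exact absurd hq (hp q)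
  | succ n ih => intro p hp q hq; exact ih (hp q hq)

lemma cone_mono {m n : ℕ} (h : m ≤ n) : cone P m ⊆ cone P n := by
  induction n, h using Nat.le_induction with
  | base => exact subset_rfl
  | succ n _ ih => exact ih.trans cone_succ_self

lemma lt_mem_cone {x y : P} {n : ℕ} (hx : x ∈ cone P (n + 1)) (h : x < y) :
    y ∈ cone P n := hx y h

variable (hP : IsOmegaPoset P)

/-- The depth of an element: the least `n` with `x ∈ cone P n`. -/
noncomputable def dd (_hP : IsOmegaPoset P) (x : P) : ℕ := sInf {n | x ∈ cone P n}

lemma dd_mem (x : P) : x ∈ cone P (dd hP x) := Nat.sInf_mem (hP.2 x)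

lemma dd_le {x : P} {n : ℕ} (h : x ∈ cone P n) : dd hP x ≤ n := Nat.sInf_le h

lemma dd_lt_dd {x y : P} (h : x < y) : dd hP y < dd hP x := by
  have hx := dd_mem hP x
  cases hk : dd hP x with
  | zero =>
    rw [hk] at hx
    exact absurd h (hx y)
  | succ n =>
    rw [hk] at hx
    have hy : y ∈ cone P n := hx y h
    have := dd_le hP hy
    omega

lemma mem_level_dd (x : P) : x ∈ level P (dd hP x) := by
  refine ⟨dd_mem hP x, fun q hq hqc => ?_⟩
  have h1 := dd_lt_dd hP hq
  have h2 := dd_le hP hqc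
  omega

lemma level_descend : ∀ {m n : ℕ}, n ≤ m → ∀ a ∈ level P m, ∃ c ∈ level P n, a ≤ c := by
  intro m
  induction m with
  | zero =>
    intro n hn a ha
    exact ⟨a, Nat.le_zero.mp hn ▸ ha, le_rfl⟩
  | succ k ih =>
    intro n hn a ha
    rcases Nat.eq_or_lt_of_le hn with h | h
    · exact ⟨a, h ▸ ha, le_rfl⟩
    · have hn' : n ≤ k := Nat.lt_succ_iff.mp h
      by_cases hak : a ∈ cone P k
      · exact ih hn' a ⟨hak, fun q hq hqc => ha.2 q hq (cone_succ_self hqc)⟩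
      · have hup : ∀ y, a < y → y ∈ cone P k := ha.1
        have hex : ∃ y, a < y := by
          by_contra hno
          push_neg at hno
          exact hak (cone_mono (Nat.zero_le k) (fun q hq => (hno q) hq))
        obtain ⟨y0, hy0⟩ := hex
        have hyl : ∃ y, a < y ∧ y ∈ level P k := by
          by_contra hno
          push_neg at hno
          cases k with
          | zero =>
            refine hno y0 hy0 ⟨hup y0 hy0, fun q hq hqc => ?_⟩
            exact hqc y0 hq
          | succ k' =>
            refine hak (fun y hy => ?_)
            have h1 : y ∈ cone P (k' + 1) := hup y hy
            have h2 : y ∉ level P (k' + 1) := hno y hy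
            have h3 : ∃ z, z < y ∧ z ∈ cone P (k' + 1) := by
              by_contra h4
              push_neg at h4
              exact h2 ⟨h1, fun q hq => h4 q hq⟩
            obtain ⟨z, hzy, hz⟩ := h3
            exact hz y hzy
        obtain ⟨y, hay, hyl⟩ := hyl
        obtain ⟨c, hc, hyc⟩ := ih hn' y hyl
        exact ⟨c, hc, hay.le.trans hyc⟩

lemma selector_iff {S : Set P} :
    IsSelector S ↔ ∀ n, ∃ a ∈ level P n, ∀ c, a ≤ c → c ∈ S := by
  constructor
  · intro h n
    by_contra hno
    push_neg at hno
    have hcap : IsCap {c : P | c ∉ S} := by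
      refine ⟨n, fun a ha => ?_⟩
      obtain ⟨c, hac, hcS⟩ := hno a ha
      exact ⟨c, hcS, hac⟩
    obtain ⟨c, hcS, hcC⟩ := h _ hcap
    exact hcC hcS
  · rintro h C ⟨n, hC⟩
    obtain ⟨a, ha, hup⟩ := h n
    obtain ⟨c, hcC, hac⟩ := hC a ha
    exact ⟨c, hup c hac, hcC⟩

lemma spec_up {S : Set P} (hS : S ∈ Spec P) {x y : P} (hx : x ∈ S) (hxy : x ≤ y) :
    y ∈ S := by
  classical
  set U : Set P := {z | ∃ a : P, (∃ m, a ∈ level P m ∧ ∀ c, a ≤ c → c ∈ S) ∧ a ≤ z} with hU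
  have hUS : U ⊆ S := by
    rintro z ⟨a, ⟨m, _, hup⟩, haz⟩
    exact hup z haz
  have hUsel : IsSelector U := by
    rw [selector_iff]
    intro n
    obtain ⟨a, ha, hup⟩ := selector_iff.mp hS.1 n
    exact ⟨a, ha, fun c hc => ⟨a, ⟨n, ha, hup⟩, hc⟩⟩
  have hUeq : U = S := hS.2 U hUS hUsel
  rw [← hUeq] at hx ⊢
  obtain ⟨a, hw, hax⟩ := hx
  exact ⟨a, hw, hax.trans hxy⟩

lemma spec_dom {S : Set P} (hS : S ∈ Spec P) {s : P} (hs : s ∈ S) :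
    ∃ m, ∀ m', m ≤ m' → ∀ a ∈ level P m', (∀ c, a ≤ c → c ∈ S) → a ≤ s := by
  have hT : ¬ IsSelector (S \ {s}) := by
    intro h
    have heq : S \ {s} = S := hS.2 _ Set.diff_subset h
    have : s ∈ S \ {s} := by rw [heq]; exact hs
    exact this.2 rfl
  rw [selector_iff] at hT
  push_neg at hT
  obtain ⟨n, hn⟩ := hT
  refine ⟨n, fun m' hm' a ha hup => ?_⟩
  obtain ⟨a', ha', haa'⟩ := level_descend hm' a ha
  obtain ⟨c, ha'c, hcT⟩ := hn a' ha'
  have hcS : c ∈ S := hup c (haa'.trans ha'c)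
  have hcs : c = s := by
    by_contra hne
    exact hcT ⟨hcS, hne⟩
  exact hcs ▸ (haa'.trans ha'c)

include hP in
lemma exists_min {S₀ : Set P} (h₀ : IsSelector S₀) :
    ∃ T, T ∈ Spec P ∧ T ⊆ S₀ := by
  classical
  set F : Set (Set P) := {T | IsSelector T ∧ T ⊆ S₀} with hF
  have H : ∀ c ⊆ F, IsChain (· ⊆ ·) c → c.Nonempty → ∃ lb ∈ F, ∀ s ∈ c, lb ⊆ s := by
    rintro c hc hchain ⟨T₀, hT₀⟩
    refine ⟨⋂₀ c, ⟨?_, (Set.sInter_subset_of_mem hT₀).trans (hc hT₀).2⟩,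
      fun s hs => Set.sInter_subset_of_mem hs⟩
    rw [selector_iff]
    intro n
    by_contra hno
    push_neg at hno
    have hch : ∀ a ∈ level P n, ∃ Ta ∈ c, ¬ (∀ x, a ≤ x → x ∈ Ta) := by
      intro a ha
      obtain ⟨x, hax, hx⟩ := hno a ha
      rw [Set.mem_sInter] at hx
      push_neg at hx
      obtain ⟨Ta, hTa, hxTa⟩ := hx
      exact ⟨Ta, hTa, fun h => hxTa (h x hax)⟩
    choose! Ta hTamem hTabad using hch
    have hlevne : (level P n).Nonempty := by
      obtain ⟨a, ha, _⟩ := selector_iff.mp (hc hT₀).1 n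
      exact ⟨a, ha⟩
    have hfin : (Ta '' (level P n)).Finite := (hP.1 n).image _
    obtain ⟨a₀, ha₀, hmin⟩ :=
      Set.Finite.exists_minimalFor' Ta (level P n) hfin hlevne
    have hTm : Ta a₀ ∈ c := hTamem a₀ ha₀
    obtain ⟨aw, haw, hawup⟩ := selector_iff.mp (hc hTm).1 n
    have hsub : Ta a₀ ⊆ Ta aw := by
      rcases eq_or_ne (Ta a₀) (Ta aw) with he | he
      · exact he.le
      · rcases hchain hTm (hTamem aw haw) he with h | h
        · exact h
        · exact hmin haw h
    exact hTabad aw haw (fun x hx => hsub (hawup x hx))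
  obtain ⟨T, hTsub, hTmin⟩ := zorn_superset_nonempty F H S₀ ⟨h₀, subset_rfl⟩
  refine ⟨T, ⟨hTmin.prop.1, fun T' hT' hT'sel => ?_⟩, hTsub⟩
  exact subset_antisymm hT' (hTmin.2 ⟨hT'sel, hT'.trans hTmin.prop.2⟩ hT')

end OPAux

open OP OPAux in
/-- Characterisations of predetermined ω-posets. -/
theorem stmt2 {P : Type*} [PartialOrder P] (hP : IsOmegaPoset P) :
    List.TFAE [
      -- (1) P is predetermined: every non-atomic p admits q with q^< = p^≤
      ∀ p : P, (∃ r, r < p) → ∃ q : P, ∀ r, (q < r ↔ p ≤ r),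
      -- (2) every p lies in a minimal selector consisting of elements comparable with p
      ∀ p : P, ∃ S : SpecT P, p ∈ S.1 ∧ S.1 ⊆ {r | p ≤ r ∨ r ≤ p},
      -- (3) inclusions of unions of basic opens indexed by a level imply refinement
      ∀ (n : ℕ) (A B : Set P), A ⊆ level P n → B ⊆ cone P n →
        (⋃ a ∈ A, pSOpen a) ⊆ (⋃ b ∈ B, pSOpen b) → refines A B ] := by
  classical
  tfae_have 1 → 2 := by
    intro h1 p
    -- the step function: pass to a "predetermined child" whenever possible
    set step : P → P := fun x => if h : ∃ r, r < x then Classical.choose (h1 x h) else x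
      with hstepdef
    have hstep_iff : ∀ (x : P) (h : ∃ r, r < x), ∀ r, (step x < r ↔ x ≤ r) := by
      intro x h r
      have := Classical.choose_spec (h1 x h)
      simp only [hstepdef, dif_pos h]
      exact this r
    have hstep_le : ∀ x : P, step x ≤ x := by
      intro x
      by_cases h : ∃ r, r < x
      · exact ((hstep_iff x h x).mpr le_rfl).le
      · simp only [hstepdef, dif_neg h]
        exact le_rfl
    have hstep_up : ∀ (x r : P), step x < r → x ≤ r := by
      intro x r hr
      by_cases h : ∃ r, r < x
      · exact (hstep_iff x h r).mp hr
      · simp only [hstepdef, dif_neg h] at hr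
        exact hr.le
    set f : ℕ → P := fun k => step^[k] p with hfdef
    have hf0 : f 0 = p := rfl
    have hfs : ∀ k, f (k + 1) = step (f k) := by
      intro k
      simp only [hfdef, Function.iterate_succ_apply']
    have hfdec : ∀ j k, j ≤ k → f k ≤ f j := by
      intro j k h
      induction k, h using Nat.le_induction with
      | base => exact le_rfl
      | succ k _ ih => exact ((hfs k) ▸ hstep_le (f k)).trans ih
    set S : Set P := {r | ∃ k, f k ≤ r} with hSdef
    have hpS : p ∈ S := ⟨0, le_rfl⟩
    have hcomp : ∀ r ∈ S, p ≤ r ∨ r ≤ p := by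
      intro r hr
      have hex : ∃ k, f k ≤ r := hr
      set k₀ := Nat.find hex with hk₀
      have hle : f k₀ ≤ r := Nat.find_spec hex
      cases hk : k₀ with
      | zero => exact Or.inl (by rw [hk] at hle; exact hle)
      | succ k =>
        have hnot : ¬ f k ≤ r := Nat.find_min hex (by omega)
        rcases eq_or_lt_of_le hle with he | hlt
        · exact Or.inr (he ▸ (hfdec 0 k₀ (Nat.zero_le _)))
        · rw [hk, hfs k] at hlt
          exact absurd (hstep_up (f k) r hlt) hnot
    have hlev : ∀ r ∈ S, r ∈ level P (dd hP p) → r = p := by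
      intro r hr hrl
      have hex : ∃ k, f k ≤ r := hr
      set k₀ := Nat.find hex with hk₀
      have hle : f k₀ ≤ r := Nat.find_spec hex
      cases hk : k₀ with
      | zero =>
        rw [hk, hf0] at hle
        rcases eq_or_lt_of_le hle with he | hlt
        · exact he.symm
        · exact absurd (dd_mem hP p) (hrl.2 p hlt)
      | succ k =>
        have hnot : ¬ f k ≤ r := Nat.find_min hex (by omega)
        rcases eq_or_lt_of_le hle with he | hlt
        · -- r = f (k+1)
          exfalso
          have hrp : r ≤ p := he ▸ (hfdec 0 k₀ (Nat.zero_le _))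
          rcases eq_or_lt_of_le hrp with he2 | hlt2
          · -- r = p forces f k = p ≤ r
            apply hnot
            have h1 : p ≤ f k := by
              rw [← he2, ← he]
              rw [hk, hfs k]
              exact hstep_le (f k)
            calc f k ≤ f 0 := hfdec 0 k (Nat.zero_le _)
            _ = p := rfl
            _ ≤ r := by rw [← he2]
          · -- r < p, but r ∈ level (dd p)
            have h1 : dd hP p < dd hP r := dd_lt_dd hP hlt2
            have h2 : dd hP r ≤ dd hP p := dd_le hP hrl.1
            omega
        · rw [hk, hfs k] at hlt
          exact absurd (hstep_up (f k) r hlt) hnot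
    have hSup : ∀ {x y : P}, x ∈ S → x ≤ y → y ∈ S := by
      rintro x y ⟨k, hk⟩ hxy
      exact ⟨k, hk.trans hxy⟩
    have hSsel : IsSelector S := by
      rw [selector_iff]
      intro n
      have hkey : ∃ k m, n ≤ m ∧ f k ∈ level P m := by
        by_cases hat : ∃ k, ¬ ∃ r, r < f k
        · obtain ⟨k, hk⟩ := hat
          refine ⟨k, max n (dd hP (f k)), le_max_left _ _, ?_, ?_⟩
          · exact cone_mono (le_max_right _ _) (dd_mem hP (f k))
          · intro q hq _
            exact hk ⟨q, hq⟩
        · push_neg at hat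
          have hstrict : ∀ k, f (k + 1) < f k := by
            intro k
            rw [hfs k]
            have h := hat k
            simp only [hstepdef, dif_pos h]
            exact (Classical.choose_spec (h1 (f k) h) (f k)).mpr le_rfl
          have hdd : ∀ k, k ≤ dd hP (f k) := by
            intro k
            induction k with
            | zero => exact Nat.zero_le _
            | succ k ih =>
              have := dd_lt_dd hP (hstrict k)
              omega
          exact ⟨n, dd hP (f n), hdd n, mem_level_dd hP (f n)⟩
      obtain ⟨k, m, hnm, hkm⟩ := hkey
      obtain ⟨c, hc, hfc⟩ := level_descend hnm (f k) hkm
      exact ⟨c, hc, fun x hx => hSup ⟨k, hfc⟩ hx⟩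
    obtain ⟨T, hTspec, hTS⟩ := exists_min hP hSsel
    have hpT : p ∈ T := by
      obtain ⟨a, ha, hup⟩ := selector_iff.mp hTspec.1 (dd hP p)
      have haT : a ∈ T := hup a le_rfl
      have : a = p := hlev a (hTS haT) ha
      exact this ▸ haT
    exact ⟨⟨T, hTspec⟩, hpT, fun r hr => hcomp r (hTS hr)⟩
  tfae_have 2 → 3 := by
    intro h2 n A B hA hB hsub a ha
    obtain ⟨S, hpS, hScomp⟩ := h2 a
    have hmem : S ∈ ⋃ b ∈ B, pSOpen b := hsub (Set.mem_biUnion ha hpS)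
    rw [Set.mem_iUnion₂] at hmem
    obtain ⟨b, hbB, hbS⟩ := hmem
    rcases hScomp hbS with h | h
    · exact ⟨b, hbB, h⟩
    · rcases eq_or_lt_of_le h with he | hlt
      · exact ⟨b, hbB, he.ge⟩
      · exact absurd (hB hbB) ((hA ha).2 b hlt)
  tfae_have 3 → 1 := by
    intro h3 p hpa
    by_contra hno
    -- hno : ¬ ∃ q, ∀ r, q < r ↔ p ≤ r
    obtain ⟨r₀, hr₀⟩ := hpa
    set K : Set ℕ := {m | ∃ x, x < p ∧ x ∈ cone P m} with hK
    have hKne : K.Nonempty := ⟨dd hP r₀, r₀, hr₀, dd_mem hP r₀⟩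
    set k := sInf K with hkdef
    have hkK : k ∈ K := Nat.sInf_mem hKne
    have hkpos : k ≠ 0 := by
      intro h
      rw [h] at hkK
      obtain ⟨x, hxp, hx0⟩ := hkK
      exact hx0 p hxp
    obtain ⟨n, hn⟩ := Nat.exists_eq_succ_of_ne_zero hkpos
    obtain ⟨x₀, hx₀p, hx₀c⟩ := hkK
    rw [hn] at hx₀c
    have hplev : p ∈ level P n := by
      refine ⟨hx₀c p hx₀p, fun q hq hqc => ?_⟩
      have : k ≤ n := Nat.sInf_le ⟨q, hq, hqc⟩
      omega
    set B : Set P := {b | b ∈ cone P n ∧ ¬ p ≤ b ∧ ¬ b ≤ p} with hBdef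
    have hincl : (⋃ a ∈ ({p} : Set P), pSOpen a) ⊆ ⋃ b ∈ B, pSOpen b := by
      intro S hS
      rw [Set.mem_iUnion₂] at hS
      obtain ⟨a, ha, hpSmem⟩ := hS
      rw [Set.mem_singleton_iff] at ha
      have hpS : p ∈ S.1 := ha ▸ hpSmem
      obtain ⟨m₀, hm₀⟩ := spec_dom S.2 hpS
      set m := max m₀ (n + 1) with hm
      obtain ⟨a, haLev, haUp⟩ := selector_iff.mp S.2.1 m
      have haS : a ∈ S.1 := haUp a le_rfl
      have hap : a ≤ p := hm₀ m (le_max_left _ _) a haLev haUp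
      have hanep : a ≠ p := by
        intro h
        rw [h] at haLev
        exact haLev.2 x₀ hx₀p (cone_mono (le_max_right _ _) hx₀c)
      have hpna : ¬ p ≤ a := fun h => hanep (le_antisymm hap h)
      -- climb upwards, staying outside p^≥, to reach an incomparable element of cone n
      have main : ∀ N, ∀ x : P, dd hP x ≤ N → x ∈ S.1 → ¬ p ≤ x →
          ∃ b ∈ B, b ∈ S.1 := by
        intro N
        induction N using Nat.strong_induction_on with
        | _ N ih =>
          intro x hdx hxS hpx
          by_cases hy : ∃ y, x < y ∧ ¬ p ≤ y
          · obtain ⟨y, hxy, hpy⟩ := hy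
            have hyS := spec_up S.2 hxS hxy.le
            have hdy : dd hP y < dd hP x := dd_lt_dd hP hxy
            exact ih (dd hP y) (by omega) y le_rfl hyS hpy
          · push_neg at hy
            by_cases hxp : x < p
            · exfalso
              refine hno ⟨x, fun r => ⟨fun h => hy r h, fun h => lt_of_lt_of_le hxp h⟩⟩
            · have hxnp : ¬ x ≤ p := by
                intro h
                rcases eq_or_lt_of_le h with he | hlt
                · exact hpx he.ge
                · exact hxp hlt
              have hxcone : x ∈ cone P n := by
                cases n with
                | zero =>
                  intro y hxy
                  have hpy : p ≤ y := hy y hxy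
                  rcases eq_or_lt_of_le hpy with he | hlt
                  · exact hxp (he ▸ hxy)
                  · exact hplev.1 y hlt
                | succ n' =>
                  intro y hxy
                  have hpy : p ≤ y := hy y hxy
                  rcases eq_or_lt_of_le hpy with he | hlt
                  · exact absurd (he ▸ hxy) hxp
                  · exact hplev.1 y hlt
              exact ⟨x, ⟨hxcone, hpx, hxnp⟩, hxS⟩
      obtain ⟨b, hbB, hbS⟩ := main (dd hP a) a le_rfl haS hpna
      rw [Set.mem_iUnion₂]
      exact ⟨b, hbB, hbS⟩
    have href : refines ({p} : Set P) B :=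
      h3 n {p} B (Set.singleton_subset_iff.mpr hplev) (fun b hb => hb.1) hincl
    obtain ⟨b, hbB, hpb⟩ := href p rfl
    exact hbB.2.1 hpb
  tfae_finish
end

section
/- Let P be a regular ω-poset and let U ⊆ P be an unbounded clique (pairwise adjacent under ⌅, and meeting C^≥ for every cap C). Then U_⌅ = {p : p ⌅ u for all u ∈ U} is the largest clique containing U, and U^⊲ = {q : ∃u ∈ U, u ⊲ q} is the smallest selector contained in U_⌅; moreover U^⊲ is a minimal selector, i.e. an element of the spectrum SP. -/
namespace OP

section Aux

variable {P : Type*} [PartialOrder P]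

theorem cone_succ_subset (n : ℕ) : cone P n ⊆ cone P (n + 1) := by
  induction n with
  | zero => intro p hp q hq; exact absurd hq (hp q)
  | succ n ih => intro p hp q hq; exact ih (hp q hq)

theorem cone_mono {m n : ℕ} (h : m ≤ n) : cone P m ⊆ cone P n := by
  induction n, h using Nat.le_induction with
  | base => exact le_rfl
  | succ n _ ih => exact ih.trans (cone_succ_subset n)

theorem mem_level_succ_of_not_cone {p : P} {n : ℕ} (hp : p ∈ cone P (n + 1))
    (hn : p ∉ cone P n) : p ∈ level P (n + 1) := by
  refine ⟨hp, fun r hr hrc => hn ?_⟩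
  exact hrc p hr

theorem level_step {p : P} {n : ℕ} (hp : p ∈ level P (n + 1)) :
    ∃ q ∈ level P n, p ≤ q := by
  obtain ⟨hpc, hpmin⟩ := hp
  by_cases hc : p ∈ cone P n
  · exact ⟨p, ⟨hc, fun r hr hrc => hpmin r hr (cone_succ_subset n hrc)⟩, le_rfl⟩
  · cases n with
    | zero =>
      simp only [cone, Set.mem_setOf_eq, not_forall, not_not] at hc
      obtain ⟨r, hr⟩ := hc
      refine ⟨r, ⟨hpc r hr, fun s hs hsc => hsc r ?_⟩, le_of_lt hr⟩
      exact hs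
    | succ m =>
      simp only [cone, Set.mem_setOf_eq, not_forall] at hc
      obtain ⟨r, hr, hrc⟩ := hc
      exact ⟨r, mem_level_succ_of_not_cone (hpc r hr) hrc, le_of_lt hr⟩

theorem level_refines {m n : ℕ} (h : m ≤ n) : refines (level P n) (level P m) := by
  induction n, h using Nat.le_induction with
  | base => exact fun a ha => ⟨a, ha, le_rfl⟩
  | succ n _ ih =>
    intro a ha
    obtain ⟨b, hb, hab⟩ := level_step ha
    obtain ⟨c, hc, hbc⟩ := ih b hb
    exact ⟨c, hc, hab.trans hbc⟩

theorem level_isCap_s4 (n : ℕ) : IsCap (level P n) := ⟨n, fun a ha => ⟨a, ha, le_rfl⟩⟩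

theorem starBelowOn_level_mono {j j' : ℕ} {p q : P} (h : j ≤ j')
    (hs : starBelowOn (level P j) p q) : starBelowOn (level P j') p q := by
  intro d hd hw
  obtain ⟨e, he, hde⟩ := level_refines h d hd
  obtain ⟨r, hrp, hrd⟩ := hw
  exact hde.trans (hs e he ⟨r, hrp, hrd.trans hde⟩)

end Aux

end OP


open OP in
/-- For an unbounded clique `U` in a regular ω-poset, `U_⌅` is the largest clique
containing `U` and `U^⊲` is the smallest selector contained in `U_⌅`; moreover `U^⊲`
is a minimal selector. -/
theorem stmt4 {P : Type*} [PartialOrder P] (hP : IsOmegaPoset P) (hreg : IsRegular P)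
    (U : Set P) (hclique : IsClique U) (hunb : IsUnbounded U) :
    (IsClique {p | ∀ u ∈ U, barwedge p u} ∧ U ⊆ {p | ∀ u ∈ U, barwedge p u} ∧
      ∀ V : Set P, IsClique V → U ⊆ V → V ⊆ {p | ∀ u ∈ U, barwedge p u}) ∧
    (IsSelector {q | ∃ u ∈ U, starBelow u q} ∧
      {q | ∃ u ∈ U, starBelow u q} ⊆ {p | ∀ u ∈ U, barwedge p u} ∧
      ∀ T : Set P, IsSelector T → T ⊆ {p | ∀ u ∈ U, barwedge p u} →
        {q | ∃ u ∈ U, starBelow u q} ⊆ T) ∧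
    {q | ∃ u ∈ U, starBelow u q} ∈ Spec P := by
    classical
  -- U^⊲ is a selector
  have hselector : IsSelector {q | ∃ u ∈ U, starBelow u q} := by
    rintro C ⟨m, hm⟩
    obtain ⟨n, -, hstar⟩ := hreg m
    obtain ⟨u, hu, c, hc, huc⟩ := hunb (level P n) (level_isCap_s4 n)
    obtain ⟨y, hy, j, hj⟩ := hstar c hc
    obtain ⟨c', hc', hyc'⟩ := hm y hy
    refine ⟨c', ⟨u, hu, j, ?_⟩, hc'⟩
    intro d hd hw
    obtain ⟨r, hru, hrd⟩ := hw
    exact (hj d hd ⟨r, hru.trans huc, hrd⟩).trans hyc'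
  -- U^⊲ ⊆ U_⌅
  have hsub : {q | ∃ u ∈ U, starBelow u q} ⊆ {p | ∀ u ∈ U, barwedge p u} := by
    rintro q ⟨u, hu, j0, hj0⟩ v hv C ⟨m, hm⟩
    obtain ⟨d, hd, hwu, hwv⟩ := hclique u hu v hv (level P (max j0 m)) (level_isCap_s4 _)
    have hdq : d ≤ q := starBelowOn_level_mono (le_max_left j0 m) hj0 d hd hwu
    obtain ⟨z, hz, hdz⟩ := level_refines (le_max_right j0 m) d hd
    obtain ⟨c', hc', hzc'⟩ := hm z hz
    obtain ⟨s, hsd, hsv⟩ := hwv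
    exact ⟨c', hc', ⟨d, hdq, hdz.trans hzc'⟩, ⟨s, hsd.trans (hdz.trans hzc'), hsv⟩⟩
  -- U_⌅ is a clique
  have hcliqueBW : IsClique {p | ∀ u ∈ U, barwedge p u} := by
    intro p hp q hq C hC
    obtain ⟨m, hm⟩ := hC
    obtain ⟨n, -, hstar⟩ := hreg m
    obtain ⟨u, hu, c, hc, huc⟩ := hunb (level P n) (level_isCap_s4 n)
    obtain ⟨y, hy, j, hj⟩ := hstar c hc
    obtain ⟨e, he, hpe, heu⟩ := hp u hu (level P j) (level_isCap_s4 j)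
    have hey : e ≤ y := by
      obtain ⟨s, hse, hsu⟩ := heu
      exact hj e he ⟨s, hsu.trans huc, hse⟩
    obtain ⟨f, hf, hqf, hfu⟩ := hq u hu (level P j) (level_isCap_s4 j)
    have hfy : f ≤ y := by
      obtain ⟨s, hsf, hsu⟩ := hfu
      exact hj f hf ⟨s, hsu.trans huc, hsf⟩
    obtain ⟨c', hc', hyc'⟩ := hm y hy
    obtain ⟨r, hrp, hre⟩ := hpe
    obtain ⟨r', hrq, hrf⟩ := hqf
    exact ⟨c', hc', ⟨r, hrp, (hre.trans hey).trans hyc'⟩,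
      ⟨r', (hrf.trans hfy).trans hyc', hrq⟩⟩
  -- minimality of U^⊲ among selectors contained in U_⌅
  have hmin : ∀ T : Set P, IsSelector T → T ⊆ {p | ∀ u ∈ U, barwedge p u} →
      {q | ∃ u ∈ U, starBelow u q} ⊆ T := by
    rintro T hT hTsub q ⟨u, hu, k, hk⟩
    obtain ⟨n, -, hstar⟩ := hreg k
    -- a uniform level N star-refining level k through level n
    obtain ⟨N, hnN, hN⟩ : ∃ N, n ≤ N ∧
        ∀ w ∈ level P n, ∃ y ∈ level P k, starBelowOn (level P N) w y := by
      have hfin := hP.1 n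
      choose y hy jf hjf using hstar
      refine ⟨max n (hfin.toFinset.sup fun w =>
        if hw : w ∈ level P n then jf w hw else 0), le_max_left _ _, ?_⟩
      intro w hw
      refine ⟨y w hw, hy w hw, starBelowOn_level_mono ?_ (hjf w hw)⟩
      refine le_trans ?_ (le_max_right _ _)
      have hmem : w ∈ hfin.toFinset := hfin.mem_toFinset.mpr hw
      have := Finset.le_sup (f := fun w =>
        if hw : w ∈ level P n then jf w hw else 0) hmem
      simpa [dif_pos hw] using this
    -- every level-N element adjacent to u lies below q
    have hclaimC : ∀ d ∈ level P N, barwedge d u → d ≤ q := by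
      intro d hd hdu
      obtain ⟨w, hw, hdw⟩ := level_refines hnN d hd
      obtain ⟨y, hy, hstarw⟩ := hN w hw
      obtain ⟨e, he, hde, heu⟩ := hdu (level P N) (level_isCap_s4 N)
      have hey : e ≤ y := by
        obtain ⟨r, hrd, hre⟩ := hde
        exact hstarw e he ⟨r, hrd.trans hdw, hre⟩
      have hyq : y ≤ q := by
        obtain ⟨s, hse, hsu⟩ := heu
        exact hk y hy ⟨s, hsu, hse.trans hey⟩
      exact (hstarw d hd ⟨d, hdw, le_rfl⟩).trans hyq
    -- the cap {q} ∪ {non-adjacent level-N elements}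
    have hcap : IsCap ({q} ∪ {d | d ∈ level P N ∧ ¬ barwedge d u} : Set P) := by
      refine ⟨N, fun d hd => ?_⟩
      by_cases hbw : barwedge d u
      · exact ⟨q, Or.inl rfl, hclaimC d hd hbw⟩
      · exact ⟨d, Or.inr ⟨hd, hbw⟩, le_rfl⟩
    obtain ⟨t, htT, htC⟩ := hT _ hcap
    rcases htC with h | ⟨-, hnbw⟩
    · rwa [Set.mem_singleton_iff.mp h] at htT
    · exact absurd (hTsub htT u hu) hnbw
  refine ⟨⟨hcliqueBW, fun p hp u hu => hclique p hp u hu,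
      fun V hV hUV v hv u hu => hV v hv u (hUV hu)⟩,
    ⟨hselector, hsub, hmin⟩, hselector, fun T hTsub hTsel =>
      Set.Subset.antisymm hTsub (hmin T hTsel (hTsub.trans hsub))⟩
end

section
/- Every ∧-preserving refiner between ω-posets is automatically ⌅-preserving: if ⊐ ⊆ Q × P is a refiner (for every cap C of Q there is a cap B of P with B ⊏ C) satisfying ⊐ ∘ ∧ ∘ ⊏ ⊆ ∧, then it also satisfies ⊐ ∘ ⌅ ∘ ⊏ ⊆ ⌅. -/
namespace OP

section Refiners

variable {P Q : Type*} [PartialOrder P] [PartialOrder Q]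

/-- A refiner: every cap of `Q` is refined through the relation by some cap of `P`. -/
def IsRefinerRel (R : Q → P → Prop) : Prop :=
  ∀ C : Set Q, IsCap C → ∃ B : Set P, IsCap B ∧ ∀ b ∈ B, ∃ c ∈ C, R c b

/-- `∧`-preserving: `⊐ ∘ ∧ ∘ ⊏ ⊆ ∧`. -/
def WedgePres (R : Q → P → Prop) : Prop :=
  ∀ q p p' q', R q p → wedge p p' → R q' p' → wedge q q'

/-- `⌅`-preserving: `⊐ ∘ ⌅ ∘ ⊏ ⊆ ⌅`. -/
def BarwedgePres (R : Q → P → Prop) : Prop :=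
  ∀ q p p' q', R q p → barwedge p p' → R q' p' → barwedge q q'

/-- The star `⊐*` of a relation: `q ⊐* p` iff some cap `C` has `C ∩ p^∧ ⊏ q`. -/
def relStar (R : Q → P → Prop) (q : Q) (p : P) : Prop :=
  ∃ C : Set P, IsCap C ∧ ∀ c ∈ C, wedge p c → R q c

/-- Composition `▷ ∘ ⊐` with the star-above relation on `Q`. -/
def starAboveComp (R : Q → P → Prop) : Q → P → Prop :=
  fun q p => ∃ q', starBelow q' q ∧ R q' p

/-- A strong refiner: a `∧`-preserving refiner with `⊐ = ▷ * ⊐`. -/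
def IsStrongRefiner (R : Q → P → Prop) : Prop :=
  IsRefinerRel R ∧ WedgePres R ∧ ∀ q p, R q p ↔ relStar (starAboveComp R) q p

/-- `φ` is the continuous map associated to `R`, i.e. `φ(S) = S^{⊏ ⊲}`. -/
def specMapOf (R : Q → P → Prop) (φ : SpecT P → SpecT Q) : Prop :=
  ∀ S : SpecT P, (φ S).1 = {r : Q | ∃ p ∈ S.1, ∃ q, R q p ∧ starBelow q r}

/-- The relation `⊒_φ`: `q ⊒_φ p` iff `q̄_S ⊇ φ[p̄_S]`. -/
def relBarPhi (φ : SpecT P → SpecT Q) (q : Q) (p : P) : Prop :=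
  ∀ S : SpecT P, S ∈ pSBar p → φ S ∈ pSBar q

/-- The relation `⊐_φ`: `q ⊐_φ p` iff `q_S ⊇ φ[p̄_S]`. -/
def relPhi (φ : SpecT P → SpecT Q) (q : Q) (p : P) : Prop :=
  ∀ S : SpecT P, S ∈ pSBar p → φ S ∈ pSOpen q

/-- An arrow: a finite relation with `← ∘ ⌅` co-surjective. -/
def IsArrow (A : Q → P → Prop) : Prop :=
  {x : Q × P | A x.1 x.2}.Finite ∧ ∀ p : P, ∃ q p', A q p' ∧ barwedge p' p

/-- `A ≤ B` for relations: `A ⊆ ≤ ∘ B ∘ ≥`. -/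
def arrowLe (A B : Q → P → Prop) : Prop :=
  ∀ q p, A q p → ∃ q' p', q ≤ q' ∧ p ≤ p' ∧ B q' p'

/-- The relation `⟨←` of an arrow: `q ⟨← p` iff `p^{⌅→} ⊲ q`. -/
def angleRel (A : Q → P → Prop) (q : Q) (p : P) : Prop :=
  ∀ q', (∃ p', barwedge p p' ∧ A q' p') → starBelow q' q

/-- The relation `⋂ₙ (←ₙ)̄_S` on spectra determined by a sequence of arrows. -/
def seqGraph (A : ℕ → Q → P → Prop) (T : SpecT Q) (S : SpecT P) : Prop :=
  ∀ n, ∃ q p, A n q p ∧ T.1 ⊆ wedgeSet q ∧ S.1 ⊆ wedgeSet p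

end Refiners

end OP

open OP in
/-- Every `∧`-preserving refiner between ω-posets is `⌅`-preserving. -/
theorem stmt6 {P Q : Type*} [PartialOrder P] [PartialOrder Q]
    (hP : IsOmegaPoset P) (hQ : IsOmegaPoset Q) (R : Q → P → Prop)
    (href : IsRefinerRel R) (hw : WedgePres R) : BarwedgePres R := by
  intro q p p' q' hqp hbw hq'p' C hC
  obtain ⟨B, hBcap, hB⟩ := href C hC
  obtain ⟨b, hbB, hpb, hbp'⟩ := hbw B hBcap
  obtain ⟨c, hcC, hcb⟩ := hB b hbB
  exact ⟨c, hcC, hw q p b c hqp hpb hcb, hw c b p' q' hcb hbp' hq'p'⟩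
end
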